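/- Let F be a field, λ ∈ F with λ ≠ 0, and A, B ⊆ F finite sets. Then T₃(G_λ(A,B)) ≤ |A||B| · Σ_{x ∈ F} r_{(A−A)(B−B)}(x)² + |A|⁴|B|⁴, where r_{(A−A)(B−B)}(x) = #{(a₁,a₂,b₁,b₂) ∈ A×A×B×B : (a₁−a₂)(b₁−b₂) = x}. -/

import Mathlib

open Finset

/-- Alternating product `g₁ g₂⁻¹ g₃ g₄⁻¹ ⋯` (exponent `+1` at odd positions,
`−1` at even positions, 1-indexed). -/
def altProd {M : Type*} [Monoid M] [Inv M] {k : ℕ} (g : Fin k → M) : M :=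
  (List.ofFn fun i : Fin k => if (i : ℕ) % 2 = 0 then g i else (g i)⁻¹).prod

/-- `T_k(G)`: the number of `2k`-tuples from `G` whose two alternating `k`-fold products
coincide. -/
noncomputable def setT {M : Type*} [Monoid M] [Inv M] (k : ℕ) (G : Set M) : ℕ :=
  Nat.card {t : (Fin k → M) × (Fin k → M) //
    (∀ i, t.1 i ∈ G) ∧ (∀ i, t.2 i ∈ G) ∧ altProd t.1 = altProd t.2}

/-- The matrix with rows `(−a, ab+λ)` and `(−1, b)`; it has determinant `λ`. -/
def hypMat {F : Type*} [CommRing F] (lam a b : F) : Matrix (Fin 2) (Fin 2) F :=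
  !![-a, a * b + lam; -1, b]

/-- `G_λ(A,B)`, the set of matrices `hypMat lam a b` with `a ∈ A`, `b ∈ B`. -/
def hypSet {F : Type*} [CommRing F] (lam : F) (A B : Set F) :
    Set (Matrix (Fin 2) (Fin 2) F) :=
  {M | ∃ a ∈ A, ∃ b ∈ B, M = hypMat lam a b}

/-- `r_{(A−A)(B−B)}(x) = #{(a₁,a₂,b₁,b₂) ∈ A×A×B×B : (a₁−a₂)(b₁−b₂) = x}`. -/
def rProd {F : Type*} [CommRing F] [DecidableEq F] (A B : Finset F) (x : F) : ℕ :=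
  (((A ×ˢ A) ×ˢ (B ×ˢ B)).filter fun t => (t.1.1 - t.1.2) * (t.2.1 - t.2.2) = x).card

lemma altProd_three {M : Type*} [Monoid M] [Inv M] (g : Fin 3 → M) :
    altProd g = g 0 * (g 1)⁻¹ * g 2 := by
  simp [altProd, List.ofFn_succ, mul_assoc]

lemma hypMat_inv {F : Type*} [Field F] {lam : F} (hlam : lam ≠ 0) (a b : F) :
    (hypMat lam a b)⁻¹ = lam⁻¹ • !![b, -(a*b+lam); 1, -a] := by
  apply Matrix.inv_eq_right_inv
  rw [Matrix.mul_smul]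
  have : hypMat lam a b * !![b, -(a*b+lam); 1, -a] = lam • (1 : Matrix (Fin 2) (Fin 2) F) := by
    ext i j
    fin_cases i <;> fin_cases j <;>
      simp [hypMat, Matrix.mul_apply, Fin.sum_univ_two] <;> ring
  rw [this, smul_smul, inv_mul_cancel₀ hlam, one_smul]

lemma hyp_eqs {F : Type*} [Field F] {lam : F} (hlam : lam ≠ 0)
    {a1 b1 a2 b2 a3 b3 a4 b4 a5 b5 a6 b6 : F}
    (h : hypMat lam a1 b1 * (hypMat lam a2 b2)⁻¹ * hypMat lam a3 b3 =
         hypMat lam a4 b4 * (hypMat lam a5 b5)⁻¹ * hypMat lam a6 b6) :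
    ((b1-b2)*(a3-a2) = (b4-b5)*(a6-a5)) ∧
    ((lam + (b1-b2)*(a3-a2))*(b6-b3) = lam*((b1-b2)-(b4-b5))) ∧
    ((lam + (b1-b2)*(a3-a2))*(a1-a4) = lam*((a6-a5)-(a3-a2))) ∧
    ((a1*(lam + (b1-b2)*(a3-a2)) + lam*(a3-a2))*(b6-b3) = lam*(a1*(b1-b2)-a4*(b4-b5))) ∧
    ((a1-a4)*(b1-b2) = (a6-a5)*(b6-b3)) := by
  rw [hypMat_inv hlam, hypMat_inv hlam] at h
  have h' : hypMat lam a1 b1 * !![b2, -(a2*b2+lam); 1, -a2] * hypMat lam a3 b3 =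
      hypMat lam a4 b4 * !![b5, -(a5*b5+lam); 1, -a5] * hypMat lam a6 b6 := by
    rw [Matrix.mul_smul, Matrix.smul_mul, Matrix.mul_smul, Matrix.smul_mul] at h
    have h2 := congrArg (fun X => lam • X) h
    simp only [smul_smul, mul_inv_cancel₀ hlam, one_smul] at h2
    convert h2 using 2
  have e00 := congrFun (congrFun h' 0) 0
  have e01 := congrFun (congrFun h' 0) 1
  have e10 := congrFun (congrFun h' 1) 0
  have e11 := congrFun (congrFun h' 1) 1
  simp [hypMat, Matrix.mul_apply, Fin.sum_univ_two] at e00 e01 e10 e11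
  refine ⟨by linear_combination -e10, by linear_combination (-b6) * e10 - e11,
    by linear_combination -e00 + a4 * e10, by linear_combination (-b6) * e00 - e01,
    ?_⟩
  have key : lam * ((a1-a4)*(b1-b2)) = lam * ((a6-a5)*(b6-b3)) := by
    linear_combination b3 * e00 - a4*b3*e10 + e01 - a4*e11
  exact mul_left_cancel₀ hlam key

lemma recI {F : Type*} [Field F] {lam a1 b1 a2 b2 a3 b3 a4 b4 a5 b5 a6 b6 a2' b5' : F}
    (hlam : lam ≠ 0)
    (h : hypMat lam a1 b1 * (hypMat lam a2 b2)⁻¹ * hypMat lam a3 b3 =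
         hypMat lam a4 b4 * (hypMat lam a5 b5)⁻¹ * hypMat lam a6 b6)
    (h' : hypMat lam a1 b1 * (hypMat lam a2' b2)⁻¹ * hypMat lam a3 b3 =
          hypMat lam a4 b4 * (hypMat lam a5 b5')⁻¹ * hypMat lam a6 b6)
    (hc : lam + (a1 - a4) * (b1 - b2) ≠ 0) : a2 = a2' ∧ b5 = b5' := by
  obtain ⟨ta, tb, tg, td, te⟩ := hyp_eqs hlam h
  obtain ⟨ta', tb', tg', td', te'⟩ := hyp_eqs hlam h'
  have k : ((a3 - a2) - (a3 - a2')) * (lam + (a1 - a4) * (b1 - b2)) = 0 := by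
    linear_combination tg - tg'
  have ha2 : a2 = a2' := by
    rcases mul_eq_zero.mp k with k0 | k0
    · linear_combination -k0
    · exact absurd k0 hc
  have k2 : lam * (b5 - b5') = 0 := by
    linear_combination tb' - tb - (b1 - b2) * (b6 - b3) * ha2
  have := (mul_eq_zero.mp k2).resolve_left hlam
  exact ⟨ha2, by linear_combination this⟩

lemma recII {F : Type*} [Field F] {lam a1 b1 a2 b2 a3 b3 a4 b4 a5 b5 a6 b6 a3' a6' b2' b6' : F}
    (hlam : lam ≠ 0)
    (h : hypMat lam a1 b1 * (hypMat lam a2 b2)⁻¹ * hypMat lam a3 b3 =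
         hypMat lam a4 b4 * (hypMat lam a5 b5)⁻¹ * hypMat lam a6 b6)
    (h' : hypMat lam a1 b1 * (hypMat lam a2 b2')⁻¹ * hypMat lam a3' b3 =
          hypMat lam a4 b4 * (hypMat lam a5 b5)⁻¹ * hypMat lam a6' b6')
    (hc : lam + (a1 - a4) * (b1 - b2) = 0)
    (hc' : lam + (a1 - a4) * (b1 - b2') = 0) :
    b2 = b2' ∧ a3 = a3' ∧ a6 = a6' ∧ b6 = b6' := by
  have hX1 : a1 - a4 ≠ 0 := by
    intro h0
    exact hlam (by linear_combination hc - (b1 - b2) * h0)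
  have hb2 : b2 = b2' := by
    have k : (a1 - a4) * (b1 - b2) = (a1 - a4) * (b1 - b2') := by
      linear_combination hc - hc'
    have := mul_left_cancel₀ hX1 k
    linear_combination -this
  rw [← hb2] at h' hc'
  have hy1 : b1 - b2 ≠ 0 := by
    intro h0
    exact hlam (by linear_combination hc - (a1 - a4) * h0)
  obtain ⟨ta, tb, tg, td, te⟩ := hyp_eqs hlam h
  obtain ⟨ta', tb', tg', td', te'⟩ := hyp_eqs hlam h'
  -- X3 = X1 for both
  have k3 : lam * ((a1 - a4) - (a6 - a5)) = 0 := by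
    linear_combination tg - (a3 - a2) * hc
  have k3' : lam * ((a1 - a4) - (a6' - a5)) = 0 := by
    linear_combination tg' - (a3' - a2) * hc
  have hX3 : a6 - a5 = a1 - a4 := by
    have := (mul_eq_zero.mp k3).resolve_left hlam
    linear_combination -this
  have hX3' : a6' - a5 = a1 - a4 := by
    have := (mul_eq_zero.mp k3').resolve_left hlam
    linear_combination -this
  have ha6 : a6 = a6' := by linear_combination hX3 - hX3'
  -- a3 = a3'
  have k4 : (b1 - b2) * ((a3 - a2) - (a3' - a2)) = 0 := by
    linear_combination ta - ta' + (b4 - b5) * hX3 - (b4 - b5) * hX3'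
  have ha3 : a3 = a3' := by
    have := (mul_eq_zero.mp k4).resolve_left hy1
    linear_combination this
  rw [← ha3] at tb' td'
  -- b6 = b6'
  by_cases hq : lam + (b1 - b2) * (a3 - a2) = 0
  · -- degenerate subcase
    have hy2 : b4 - b5 = b1 - b2 := by
      have k : lam * ((b1 - b2) - (b4 - b5)) = 0 := by
        linear_combination -tb + (b6 - b3) * hq
      have := (mul_eq_zero.mp k).resolve_left hlam
      linear_combination -this
    have k6 : lam * ((a3 - a2) * (b6 - b3) + lam) = 0 := by
      linear_combination td - a1 * (b6 - b3) * hq + lam * hc - lam * a4 * hy2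
    have k6' : lam * ((a3 - a2) * (b6' - b3) + lam) = 0 := by
      linear_combination td' - a1 * (b6' - b3) * hq + lam * hc - lam * a4 * hy2
    have e6 : (a3 - a2) * (b6 - b3) = -lam := by
      have := (mul_eq_zero.mp k6).resolve_left hlam
      linear_combination this
    have e6' : (a3 - a2) * (b6' - b3) = -lam := by
      have := (mul_eq_zero.mp k6').resolve_left hlam
      linear_combination this
    have hX2 : a3 - a2 ≠ 0 := by
      intro h0
      exact hlam (by linear_combination e6 - (b6 - b3) * h0)
    have := mul_left_cancel₀ hX2 (e6.trans e6'.symm)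
    exact ⟨hb2, ha3, ha6, by linear_combination this⟩
  · have k5 : (lam + (b1 - b2) * (a3 - a2)) * (b6 - b6') = 0 := by
      linear_combination tb - tb'
    have := (mul_eq_zero.mp k5).resolve_left hq
    exact ⟨hb2, ha3, ha6, by linear_combination this⟩

theorem stmt11 {F : Type*} [Field F] [DecidableEq F] (lam : F) (hlam : lam ≠ 0)
    (A B : Finset F) :
    setT 3 (hypSet lam ↑A ↑B) ≤
      A.card * B.card * (∑ᶠ x : F, rProd A B x ^ 2) + A.card ^ 4 * B.card ^ 4 := by
  classical
  set f : (F × F) × (F × F) → F := fun t => (t.1.1 - t.1.2) * (t.2.1 - t.2.2) with hf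
  set P2 : Finset ((F × F) × (F × F)) := (A ×ˢ A) ×ˢ (B ×ˢ B) with hP2
  set Q : Finset ((((F × F) × (F × F))) × (((F × F) × (F × F)))) :=
    (P2 ×ˢ P2).filter (fun t => f t.1 = f t.2) with hQ
  have hrx : ∀ x : F, rProd A B x = (P2.filter fun t => f t = x).card := by
    intro x
    rw [rProd]
  -- Claim 3 : the energy identity
  have hQcard : ∑ᶠ x : F, rProd A B x ^ 2 = Q.card := by
    have hsupp : Function.support (fun x : F => (rProd A B x ^ 2 : ℕ)) ⊆ ↑(P2.image f) := by
      intro x hx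
      simp only [Function.mem_support] at hx
      have hne : (P2.filter fun t => f t = x).Nonempty := by
        rw [← Finset.card_pos, ← hrx x]
        have : rProd A B x ≠ 0 := by
          intro h0
          exact hx (by rw [h0]; simp)
        exact Nat.pos_of_ne_zero this
      obtain ⟨t, ht⟩ := hne
      rw [mem_filter] at ht
      exact Finset.mem_coe.mpr (ht.2 ▸ mem_image_of_mem f ht.1)
    rw [finsum_eq_sum_of_support_subset _ hsupp]
    rw [card_eq_sum_card_fiberwise (f := fun t => f t.1) (t := P2.image f)
      (fun t ht => by
        rw [hQ, mem_coe, mem_filter] at ht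
        exact mem_coe.mpr (mem_image_of_mem _ (mem_product.mp ht.1).1))]
    refine sum_congr rfl fun x _ => ?_
    have hfib : Q.filter (fun t => f t.1 = x) =
        (P2.filter fun t => f t = x) ×ˢ (P2.filter fun t => f t = x) := by
      ext t
      simp only [hQ, mem_filter, mem_product]
      constructor
      · rintro ⟨⟨⟨m1, m2⟩, he⟩, hx1⟩
        exact ⟨⟨m1, hx1⟩, ⟨m2, he ▸ hx1⟩⟩
      · rintro ⟨⟨m1, hx1⟩, ⟨m2, hx2⟩⟩
        exact ⟨⟨⟨m1, m2⟩, hx1.trans hx2.symm⟩, hx1⟩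
    rw [hfib, card_product, hrx x]
    ring
  -- the solution finset
  set D : Finset ((Fin 3 → F × F) × (Fin 3 → F × F)) :=
    (Fintype.piFinset fun _ => A ×ˢ B) ×ˢ (Fintype.piFinset fun _ => A ×ˢ B) with hD
  set meq : ((Fin 3 → F × F) × (Fin 3 → F × F)) → Prop := fun w =>
    hypMat lam (w.1 0).1 (w.1 0).2 * (hypMat lam (w.1 1).1 (w.1 1).2)⁻¹ *
      hypMat lam (w.1 2).1 (w.1 2).2 =
    hypMat lam (w.2 0).1 (w.2 0).2 * (hypMat lam (w.2 1).1 (w.2 1).2)⁻¹ *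
      hypMat lam (w.2 2).1 (w.2 2).2 with hmeq
  set sols : Finset ((Fin 3 → F × F) × (Fin 3 → F × F)) := D.filter meq with hsols
  -- Step 1 : setT ≤ sols.card
  have step1 : setT 3 (hypSet lam (↑A : Set F) (↑B : Set F)) ≤ sols.card := by
    rw [← Nat.card_eq_finsetCard]
    unfold setT
    have hprop : ∀ w : {x // x ∈ sols},
        (∀ i : Fin 3, (fun j => hypMat lam (w.1.1 j).1 (w.1.1 j).2) i ∈
            hypSet lam (↑A : Set F) (↑B : Set F)) ∧
        (∀ i : Fin 3, (fun j => hypMat lam (w.1.2 j).1 (w.1.2 j).2) i ∈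
            hypSet lam (↑A : Set F) (↑B : Set F)) ∧
        altProd (fun j => hypMat lam (w.1.1 j).1 (w.1.1 j).2) =
          altProd (fun j => hypMat lam (w.1.2 j).1 (w.1.2 j).2) := by
      rintro ⟨w, hw⟩
      rw [hsols, mem_filter, hD, mem_product, Fintype.mem_piFinset, Fintype.mem_piFinset] at hw
      obtain ⟨⟨hw1, hw2⟩, hweq⟩ := hw
      refine ⟨fun i => ⟨(w.1 i).1, (mem_product.mp (hw1 i)).1, (w.1 i).2,
          (mem_product.mp (hw1 i)).2, rfl⟩,
        fun i => ⟨(w.2 i).1, (mem_product.mp (hw2 i)).1, (w.2 i).2,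
          (mem_product.mp (hw2 i)).2, rfl⟩, ?_⟩
      rw [altProd_three, altProd_three]
      exact hweq
    apply Nat.card_le_card_of_surjective
      (fun w => ⟨((fun j => hypMat lam (w.1.1 j).1 (w.1.1 j).2),
                  (fun j => hypMat lam (w.1.2 j).1 (w.1.2 j).2)),
                 (hprop w).1, (hprop w).2.1, (hprop w).2.2⟩)
    rintro ⟨⟨t1, t2⟩, hb⟩
    have h1 := hb.1
    have h2 := hb.2.1
    have heq := hb.2.2
    simp only [hypSet, Set.mem_setOf_eq] at h1 h2
    choose g1 hg1 k1 hk1 ht1 using h1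
    choose g2 hg2 k2 hk2 ht2 using h2
    refine ⟨⟨((fun i => (g1 i, k1 i)), (fun i => (g2 i, k2 i))), ?_⟩, ?_⟩
    · rw [hsols, mem_filter]
      constructor
      · rw [hD, mem_product, Fintype.mem_piFinset, Fintype.mem_piFinset]
        exact ⟨fun i => mem_product.mpr ⟨hg1 i, hk1 i⟩,
               fun i => mem_product.mpr ⟨hg2 i, hk2 i⟩⟩
      · show meq _
        rw [hmeq]
        dsimp only
        rw [← ht1 0, ← ht1 1, ← ht1 2, ← ht2 0, ← ht2 1, ← ht2 2]
        rw [altProd_three, altProd_three] at heq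
        exact heq
    · apply Subtype.ext
      dsimp only
      exact Prod.ext (funext fun i => (ht1 i).symm) (funext fun i => (ht2 i).symm)
  -- case condition
  set cI : ((Fin 3 → F × F) × (Fin 3 → F × F)) → Prop := fun w =>
    lam + ((w.1 0).1 - (w.2 0).1) * ((w.1 0).2 - (w.1 1).2) ≠ 0 with hcI
  have hsplit : (sols.filter cI).card + (sols.filter (fun w => ¬ cI w)).card = sols.card :=
    card_filter_add_card_filter_not _
  -- main case
  have main1 : (sols.filter cI).card ≤ (A ×ˢ (B ×ˢ Q)).card := by
    apply card_le_card_of_injOn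
      (fun w => ((w.1 2).1, ((w.2 0).2,
        ((((w.1 0).1, (w.2 0).1), ((w.1 0).2, (w.1 1).2)),
         (((w.2 2).1, (w.2 1).1), ((w.2 2).2, (w.1 2).2))))))
    · intro w hw
      rw [mem_coe, mem_filter] at hw
      obtain ⟨hwsols, hwc⟩ := hw
      rw [hsols, mem_filter] at hwsols
      obtain ⟨hwD, hweq⟩ := hwsols
      rw [hmeq] at hweq
      rw [hD, mem_product, Fintype.mem_piFinset, Fintype.mem_piFinset] at hwD
      obtain ⟨hw1, hw2⟩ := hwD
      have m : ∀ i, (w.1 i).1 ∈ A ∧ (w.1 i).2 ∈ B := fun i => mem_product.mp (hw1 i)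
      have m' : ∀ i, (w.2 i).1 ∈ A ∧ (w.2 i).2 ∈ B := fun i => mem_product.mp (hw2 i)
      rw [mem_coe, mem_product]
      refine ⟨(m 2).1, ?_⟩
      rw [mem_product]
      refine ⟨(m' 0).2, ?_⟩
      rw [hQ, mem_filter, mem_product]
      refine ⟨⟨?_, ?_⟩, ?_⟩
      · rw [hP2, mem_product]
        exact ⟨mem_product.mpr ⟨(m 0).1, (m' 0).1⟩, mem_product.mpr ⟨(m 0).2, (m 1).2⟩⟩
      · rw [hP2, mem_product]
        exact ⟨mem_product.mpr ⟨(m' 2).1, (m' 1).1⟩, mem_product.mpr ⟨(m' 2).2, (m 2).2⟩⟩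
      · obtain ⟨-, -, -, -, te⟩ := hyp_eqs hlam hweq
        simp only [hf]
        exact te
    · intro w hw v hv him
      simp only [mem_coe, mem_filter] at hw hv
      obtain ⟨hwsols, hwc⟩ := hw
      obtain ⟨hvsols, hvc⟩ := hv
      have hweq : meq w := (mem_filter.mp hwsols).2
      have hveq : meq v := (mem_filter.mp hvsols).2
      rw [hmeq] at hweq hveq
      simp only [Prod.mk.injEq] at him
      obtain ⟨e32, ⟨e42, ⟨⟨⟨e11, e41⟩, e12, e22⟩, ⟨e61, e51⟩, e62, e321⟩⟩⟩ := him
      rw [← e11, ← e12, ← e22, ← e32, ← e321, ← e41, ← e42, ← e51, ← e61, ← e62] at hveq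
      simp only [hcI] at hwc
      obtain ⟨ha2, hb5⟩ := recI hlam hweq hveq hwc
      have hfst : w.1 = v.1 := by
        funext i
        fin_cases i
        · exact Prod.ext_iff.mpr ⟨e11, e12⟩
        · exact Prod.ext_iff.mpr ⟨ha2, e22⟩
        · exact Prod.ext_iff.mpr ⟨e32, e321⟩
      have hsnd : w.2 = v.2 := by
        funext i
        fin_cases i
        · exact Prod.ext_iff.mpr ⟨e41, e42⟩
        · exact Prod.ext_iff.mpr ⟨e51, hb5⟩
        · exact Prod.ext_iff.mpr ⟨e61, e62⟩
      exact Prod.ext_iff.mpr ⟨hfst, hsnd⟩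
  -- degenerate case
  have main2 : (sols.filter (fun w => ¬ cI w)).card ≤
      ((A ×ˢ (A ×ˢ (A ×ˢ A))) ×ˢ (B ×ˢ (B ×ˢ (B ×ˢ B)))).card := by
    apply card_le_card_of_injOn
      (fun w => (((w.1 0).1, ((w.1 1).1, ((w.2 0).1, (w.2 1).1))),
                 ((w.1 0).2, ((w.1 2).2, ((w.2 0).2, (w.2 1).2)))))
    · intro w hw
      rw [mem_coe, mem_filter] at hw
      obtain ⟨hwsols, hwc⟩ := hw
      rw [hsols, mem_filter] at hwsols
      obtain ⟨hwD, hweq⟩ := hwsols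
      rw [hD, mem_product, Fintype.mem_piFinset, Fintype.mem_piFinset] at hwD
      obtain ⟨hw1, hw2⟩ := hwD
      have m : ∀ i, (w.1 i).1 ∈ A ∧ (w.1 i).2 ∈ B := fun i => mem_product.mp (hw1 i)
      have m' : ∀ i, (w.2 i).1 ∈ A ∧ (w.2 i).2 ∈ B := fun i => mem_product.mp (hw2 i)
      simp only [mem_coe, mem_product]
      exact ⟨⟨(m 0).1, (m 1).1, (m' 0).1, (m' 1).1⟩, (m 0).2, (m 2).2, (m' 0).2, (m' 1).2⟩
    · intro w hw v hv him
      simp only [mem_coe, mem_filter] at hw hv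
      obtain ⟨hwsols, hwc⟩ := hw
      obtain ⟨hvsols, hvc⟩ := hv
      have hweq : meq w := (mem_filter.mp hwsols).2
      have hveq : meq v := (mem_filter.mp hvsols).2
      rw [hmeq] at hweq hveq
      simp only [Prod.mk.injEq] at him
      obtain ⟨⟨e11, e21, e41, e51⟩, e12, e322, e42, e52⟩ := him
      rw [← e11, ← e12, ← e21, ← e322, ← e41, ← e42, ← e51, ← e52] at hveq
      simp only [hcI, not_not] at hwc hvc
      rw [← e11, ← e12, ← e41] at hvc
      obtain ⟨hb2, ha3, ha6, hb6⟩ := recII hlam hweq hveq hwc hvc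
      have hfst : w.1 = v.1 := by
        funext i
        fin_cases i
        · exact Prod.ext_iff.mpr ⟨e11, e12⟩
        · exact Prod.ext_iff.mpr ⟨e21, hb2⟩
        · exact Prod.ext_iff.mpr ⟨ha3, e322⟩
      have hsnd : w.2 = v.2 := by
        funext i
        fin_cases i
        · exact Prod.ext_iff.mpr ⟨e41, e42⟩
        · exact Prod.ext_iff.mpr ⟨e51, e52⟩
        · exact Prod.ext_iff.mpr ⟨ha6, hb6⟩
      exact Prod.ext_iff.mpr ⟨hfst, hsnd⟩
  calc setT 3 (hypSet lam (↑A : Set F) (↑B : Set F)) ≤ sols.card := step1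
    _ = (sols.filter cI).card + (sols.filter (fun w => ¬ cI w)).card := hsplit.symm
    _ ≤ (A ×ˢ (B ×ˢ Q)).card + ((A ×ˢ (A ×ˢ (A ×ˢ A))) ×ˢ (B ×ˢ (B ×ˢ (B ×ˢ B)))).card :=
        add_le_add main1 main2
    _ = A.card * B.card * Q.card + A.card ^ 4 * B.card ^ 4 := by
        simp only [card_product]
        ring
    _ = A.card * B.card * (∑ᶠ x : F, rProd A B x ^ 2) + A.card ^ 4 * B.card ^ 4 := by
        rw [hQcard]
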